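/- Let Φ = {p_1,…,p_n, p̄_1,…,p̄_n, q_1,…,q_m} and ψ := (⋀_{i=1}^n (p_i ∨ p̄_i)) ∧ (θ ∨ ⋁_{i=1}^n (p_i ∧ p̄_i)). If χ is a conjunction of at most n distinct atoms from Φ with χ ⊨ ψ, then χ contains exactly n atoms, it contains no q_j, and for each i ∈ {1,…,n} it contains exactly one of p_i and p̄_i. -/

import Mathlib

inductive PForm (α : Type) : Type where
  | tr : PForm α
  | fls : PForm α
  | atom : α → PForm α
  | neg : PForm α → PForm α
  | conj : PForm α → PForm α → PForm α
  | disj : PForm α → PForm α → PForm α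

namespace PForm

def eval {α : Type} (s : α → Bool) : PForm α → Bool
  | tr => true
  | fls => false
  | atom p => s p
  | neg φ => !(φ.eval s)
  | conj φ ψ => φ.eval s && ψ.eval s
  | disj φ ψ => φ.eval s || ψ.eval s

def atoms {α : Type} [DecidableEq α] : PForm α → Finset α
  | tr => ∅
  | fls => ∅
  | atom p => {p}
  | neg φ => φ.atoms
  | conj φ ψ => φ.atoms ∪ ψ.atoms
  | disj φ ψ => φ.atoms ∪ ψ.atoms

/-- Negation-free formulas: built from atoms using only ∧ and ∨. -/
def NegFree {α : Type} : PForm α → Prop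
  | atom _ => True
  | conj φ ψ => φ.NegFree ∧ ψ.NegFree
  | disj φ ψ => φ.NegFree ∧ ψ.NegFree
  | _ => False

def map {α β : Type} (f : α → β) : PForm α → PForm β
  | tr => tr
  | fls => fls
  | atom p => atom (f p)
  | neg φ => neg (φ.map f)
  | conj φ ψ => conj (φ.map f) (ψ.map f)
  | disj φ ψ => disj (φ.map f) (ψ.map f)

def subst {α : Type} (f : α → PForm α) : PForm α → PForm α
  | tr => tr
  | fls => fls
  | atom p => f p
  | neg φ => neg (φ.subst f)
  | conj φ ψ => conj (φ.subst f) (ψ.subst f)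
  | disj φ ψ => disj (φ.subst f) (ψ.subst f)

end PForm

/-- Logical entailment: every assignment satisfying φ satisfies ψ. -/
def Entails {α : Type} (φ ψ : PForm α) : Prop :=
  ∀ s : α → Bool, φ.eval s = true → ψ.eval s = true

def bigConj {α : Type} (l : List (PForm α)) : PForm α := l.foldr PForm.conj PForm.tr
def bigDisj {α : Type} (l : List (PForm α)) : PForm α := l.foldr PForm.disj PForm.fls

/-- A literal (p, true) is the atom p; (p, false) is ¬p. -/
def litForm {α : Type} (l : α × Bool) : PForm α :=
  if l.2 then PForm.atom l.1 else PForm.neg (PForm.atom l.1)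

def conjLits {α : Type} (L : List (α × Bool)) : PForm α := bigConj (L.map litForm)
def disjLits {α : Type} (L : List (α × Bool)) : PForm α := bigDisj (L.map litForm)

/-- The maximal conjunction w.r.t. Φ corresponding to assignment s. -/
noncomputable def maxConj {α : Type} [DecidableEq α] (Φ : Finset α) (s : α → Bool) : PForm α :=
  conjLits (Φ.toList.map fun p => (p, s p))

lemma bigConj_eval_iff {α : Type} (s : α → Bool) (l : List (PForm α)) :
    (bigConj l).eval s = true ↔ ∀ φ ∈ l, φ.eval s = true := by
  induction l with
  | nil => simp [bigConj, PForm.eval]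
  | cons a t ih => simp [bigConj, PForm.eval, Bool.and_eq_true] at *; tauto

theorem stmt_9 (n m : ℕ) (θ : PForm (Fin n ⊕ Fin m))
    (p : Fin n → (Fin n ⊕ (Fin n ⊕ Fin m)))
    (pbar : Fin n → (Fin n ⊕ (Fin n ⊕ Fin m)))
    (q : Fin m → (Fin n ⊕ (Fin n ⊕ Fin m)))
    (hp : p = fun i => Sum.inl i)
    (hpbar : pbar = fun i => Sum.inr (Sum.inl i))
    (hq : q = fun j => Sum.inr (Sum.inr j))
    (χ : Finset (Fin n ⊕ (Fin n ⊕ Fin m))) (hcard : χ.card ≤ n)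
    (hent : Entails (bigConj (χ.toList.map PForm.atom))
      (PForm.conj
        (bigConj ((List.finRange n).map fun i =>
          PForm.disj (PForm.atom (p i)) (PForm.atom (pbar i))))
        (PForm.disj
          (θ.map (fun x => match x with
            | Sum.inl i => p i
            | Sum.inr j => q j))
          (bigDisj ((List.finRange n).map fun i =>
            PForm.conj (PForm.atom (p i)) (PForm.atom (pbar i))))))) :
    χ.card = n ∧ (∀ j : Fin m, q j ∉ χ) ∧
      ∀ i : Fin n, (p i ∈ χ ∧ pbar i ∉ χ) ∨ (pbar i ∈ χ ∧ p i ∉ χ)  := by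
  subst hp hpbar hq
  classical
  set s : Fin n ⊕ (Fin n ⊕ Fin m) → Bool := fun x => decide (x ∈ χ) with hs
  have hsat : (bigConj (χ.toList.map PForm.atom)).eval s = true := by
    rw [bigConj_eval_iff]
    intro φ hφ
    simp only [List.mem_map] at hφ
    obtain ⟨a, ha, rfl⟩ := hφ
    simp [PForm.eval, hs, Finset.mem_toList.mp ha]
  have h := hent s hsat
  simp only [PForm.eval, Bool.and_eq_true] at h
  have h1 := h.1
  rw [bigConj_eval_iff] at h1
  have key : ∀ i : Fin n, (Sum.inl i : Fin n ⊕ (Fin n ⊕ Fin m)) ∈ χ ∨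
      (Sum.inr (Sum.inl i) : Fin n ⊕ (Fin n ⊕ Fin m)) ∈ χ := by
    intro i
    have := h1 _ (List.mem_map_of_mem (List.mem_finRange i))
    simpa [PForm.eval, hs] using this
  let f : Fin n → Fin n ⊕ (Fin n ⊕ Fin m) := fun i =>
    if Sum.inl i ∈ χ then Sum.inl i else Sum.inr (Sum.inl i)
  have hfmem : ∀ i, f i ∈ χ := by
    intro i
    by_cases hi : (Sum.inl i : Fin n ⊕ (Fin n ⊕ Fin m)) ∈ χ
    · simp [f, hi]
    · simp only [f, hi, if_false]
      exact (key i).resolve_left hi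
  have hfinj : Function.Injective f := by
    intro a b hab
    simp only [f] at hab
    split_ifs at hab <;> simp_all
  have hsub : Finset.image f Finset.univ ⊆ χ := by
    intro x hx
    simp only [Finset.mem_image, Finset.mem_univ, true_and] at hx
    obtain ⟨i, rfl⟩ := hx
    exact hfmem i
  have hcard' : (Finset.image f Finset.univ).card = n := by
    rw [Finset.card_image_of_injective _ hfinj, Finset.card_univ, Fintype.card_fin]
  have heq : Finset.image f Finset.univ = χ :=
    Finset.eq_of_subset_of_card_le hsub (by omega)
  have hnotboth : ∀ i : Fin n, ¬((Sum.inl i : Fin n ⊕ (Fin n ⊕ Fin m)) ∈ χ ∧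
      (Sum.inr (Sum.inl i) : Fin n ⊕ (Fin n ⊕ Fin m)) ∈ χ) := by
    rintro i ⟨hpi, hqi⟩
    rw [← heq] at hqi
    simp only [Finset.mem_image, Finset.mem_univ, true_and] at hqi
    obtain ⟨i', hi'⟩ := hqi
    simp only [f] at hi'
    split_ifs at hi' <;> simp_all
  refine ⟨by rw [← heq]; exact hcard', ?_, ?_⟩
  · intro j hj
    rw [← heq] at hj
    simp only [Finset.mem_image, Finset.mem_univ, true_and] at hj
    obtain ⟨i, hi⟩ := hj
    simp only [f] at hi
    split_ifs at hi <;> simp_all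
  · intro i
    rcases key i with hl | hr
    · exact Or.inl ⟨hl, fun h2 => hnotboth i ⟨hl, h2⟩⟩
    · exact Or.inr ⟨hr, fun h2 => hnotboth i ⟨h2, hr⟩⟩
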